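/- For every integer k ≥ 2, the proportion of coprime tuples among all k-event signals converges to 1/ζ(k): the limit as N → ∞ of |C(N,k)| / binomial(N,k) equals ζ(k)^{-1}, where ζ(k) = ∑_{n=1}^∞ n^{-k}. -/

import Mathlib

open Filter

/-- The space of `k`-event signals: `k` inter-event intervals, each at least 1,
summing to at most `N`. -/
def SignalSpace (N k : ℕ) : Finset (Fin k → ℕ) :=
  (Fintype.piFinset fun _ => Finset.Icc 1 N).filter fun t => ∑ i, t i ≤ N

/-- The signals in `SignalSpace N k` whose coordinates are coprime (gcd 1). -/
def CoprimeCode (N k : ℕ) : Finset (Fin k → ℕ) :=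
  (SignalSpace N k).filter fun t => Finset.univ.gcd t = 1

/-- `ζ(k) = ∑_{n=1}^∞ n^{-k}`. -/
noncomputable def zetaSum (k : ℕ) : ℝ := ∑' n : ℕ, (1 : ℝ) / ((n : ℝ) + 1) ^ k

namespace CoprimeDensityAux

open Finset ArithmeticFunction
open scoped ArithmeticFunction.Moebius ArithmeticFunction.zeta

lemma mem_sig {N k : ℕ} {t : Fin k → ℕ} :
    t ∈ SignalSpace N k ↔ (∀ i, 1 ≤ t i) ∧ ∑ i, t i ≤ N := by
  simp only [SignalSpace, Finset.mem_filter, Fintype.mem_piFinset, Finset.mem_Icc]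
  constructor
  · rintro ⟨h1, h2⟩; exact ⟨fun i => (h1 i).1, h2⟩
  · rintro ⟨h1, h2⟩
    refine ⟨fun i => ⟨h1 i, le_trans ?_ h2⟩, h2⟩
    exact Finset.single_le_sum (fun j _ => Nat.zero_le _) (Finset.mem_univ i)

lemma sig_rec (N k : ℕ) :
    (SignalSpace (N+1) (k+1)).card = (SignalSpace N k).card + (SignalSpace N (k+1)).card := by
  classical
  rw [← Finset.card_filter_add_card_filter_not
    (p := fun t : Fin (k+1) → ℕ => t (Fin.last k) = 1)]
  congr 1
  · refine Finset.card_nbij' (fun t => t ∘ Fin.castSucc) (fun s => Fin.snoc s 1) ?_ ?_ ?_ ?_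
    · intro t ht
      simp only [Finset.mem_coe, Finset.mem_filter, mem_sig] at ht
      obtain ⟨⟨h1, h2⟩, h3⟩ := ht
      rw [Fin.sum_univ_castSucc, h3] at h2
      refine mem_sig.2 ⟨fun i => h1 _, ?_⟩
      simp only [Function.comp_apply]
      omega
    · intro s hs
      rw [Finset.mem_coe, mem_sig] at hs
      simp only [Finset.mem_coe, Finset.mem_filter, mem_sig, Fin.snoc_last]
      refine ⟨⟨fun i => ?_, ?_⟩, by simp⟩
      · refine Fin.lastCases ?_ (fun j => ?_) i <;> simp [hs.1]
      · rw [Fin.sum_univ_castSucc]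
        simp only [Fin.snoc_castSucc, Fin.snoc_last]
        omega
    · intro t ht
      simp only [Finset.mem_coe, Finset.mem_filter] at ht
      funext i
      refine Fin.lastCases ?_ (fun j => ?_) i <;> simp [ht.2]
    · intro s hs; funext i; simp
  · refine Finset.card_nbij' (fun t => Function.update t (Fin.last k) (t (Fin.last k) - 1))
      (fun s => Function.update s (Fin.last k) (s (Fin.last k) + 1)) ?_ ?_ ?_ ?_
    · intro t ht
      simp only [Finset.mem_coe, Finset.mem_filter, mem_sig] at ht
      obtain ⟨⟨h1, h2⟩, h3⟩ := ht
      have hl : 2 ≤ t (Fin.last k) := by have := h1 (Fin.last k); omega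
      rw [Finset.mem_coe, mem_sig]
      simp only []
      constructor
      · intro i
        rcases eq_or_ne i (Fin.last k) with rfl | h
        · simp only [Function.update_self]; omega
        · rw [Function.update_of_ne h]; exact h1 i
      · rw [Fin.sum_univ_castSucc] at h2 ⊢
        simp only [Function.update_self]
        have hu : ∀ j : Fin k, Function.update t (Fin.last k) (t (Fin.last k) - 1) j.castSucc
            = t j.castSucc := fun j => Function.update_of_ne (Fin.castSucc_lt_last j).ne _ _
        rw [Finset.sum_congr rfl fun j _ => hu j]
        omega
    · intro s hs
      rw [Finset.mem_coe, mem_sig] at hs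
      obtain ⟨h1, h2⟩ := hs
      simp only [Finset.mem_coe, Finset.mem_filter, mem_sig]
      have hupd : ∀ j : Fin k, Function.update s (Fin.last k) (s (Fin.last k) + 1) j.castSucc
          = s j.castSucc := fun j => Function.update_of_ne (Fin.castSucc_lt_last j).ne _ _
      refine ⟨⟨fun i => ?_, ?_⟩, ?_⟩
      · rcases eq_or_ne i (Fin.last k) with rfl | h
        · simp
        · rw [Function.update_of_ne h]; exact h1 i
      · rw [Fin.sum_univ_castSucc] at h2 ⊢
        rw [Finset.sum_congr rfl fun j _ => hupd j]
        simp only [Function.update_self]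
        omega
      · simp only [Function.update_self]
        have := h1 (Fin.last k); omega
    · intro t ht
      simp only [Finset.mem_coe, Finset.mem_filter, mem_sig] at ht
      have h1 : 1 ≤ t (Fin.last k) := ht.1.1 (Fin.last k)
      funext i
      simp only []
      rcases eq_or_ne i (Fin.last k) with rfl | h
      · simp only [Function.update_self]
        omega
      · rw [Function.update_of_ne h, Function.update_of_ne h]
    · intro s hs
      funext i
      simp only []
      rcases eq_or_ne i (Fin.last k) with rfl | h
      · simp
      · rw [Function.update_of_ne h, Function.update_of_ne h]

lemma sig_card : ∀ (k N : ℕ), (SignalSpace N k).card = N.choose k := by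
  intro k
  induction k with
  | zero =>
    intro N
    rw [Nat.choose_zero_right]
    rw [Finset.card_eq_one]
    exact ⟨fun i => i.elim0, by ext t; simp [mem_sig, Subsingleton.elim t fun i => i.elim0]⟩
  | succ k ih =>
    intro N
    induction N with
    | zero =>
      rw [Nat.choose_eq_zero_of_lt (Nat.succ_pos k), Finset.card_eq_zero]
      ext t
      simp only [mem_sig, Finset.notMem_empty, iff_false, not_and]
      intro h1
      have : 1 ≤ ∑ i, t i := le_trans (h1 0)
        (Finset.single_le_sum (fun j _ => Nat.zero_le _) (Finset.mem_univ 0))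
      omega
    | succ N ihN =>
      rw [sig_rec, ih, ihN, Nat.choose_succ_succ, Nat.add_comm]

lemma dvd_count (N k d : ℕ) (hd : 1 ≤ d) :
    ((SignalSpace N k).filter (fun t => ∀ i, d ∣ t i)).card = (N / d).choose k := by
  classical
  rw [← sig_card]
  refine Finset.card_nbij' (fun t i => t i / d) (fun s i => d * s i) ?_ ?_ ?_ ?_
  · intro t ht
    simp only [Finset.mem_coe, Finset.mem_filter, mem_sig] at ht
    obtain ⟨⟨h1, h2⟩, h3⟩ := ht
    refine mem_sig.2 ⟨fun i => ?_, ?_⟩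
    · exact (Nat.one_le_div_iff hd).2 (Nat.le_of_dvd (h1 i) (h3 i))
    · rw [Nat.le_div_iff_mul_le hd, Finset.sum_mul]
      calc ∑ i, t i / d * d = ∑ i, t i := by
            exact Finset.sum_congr rfl fun i _ => Nat.div_mul_cancel (h3 i)
        _ ≤ N := h2
  · intro s hs
    rw [Finset.mem_coe, mem_sig] at hs
    obtain ⟨h1, h2⟩ := hs
    simp only [Finset.mem_coe, Finset.mem_filter, mem_sig]
    refine ⟨⟨fun i => le_trans hd (Nat.le_mul_of_pos_right d (h1 i)), ?_⟩,
      fun i => Dvd.intro _ rfl⟩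
    calc ∑ i, d * s i = d * ∑ i, s i := by rw [Finset.mul_sum]
      _ ≤ d * (N / d) := Nat.mul_le_mul_left d h2
      _ ≤ N := by rw [mul_comm]; exact Nat.div_mul_le_self N d
  · intro t ht
    simp only [Finset.mem_coe, Finset.mem_filter] at ht
    funext i
    exact Nat.mul_div_cancel' (ht.2 i)
  · intro s hs
    funext i
    exact Nat.mul_div_cancel_left _ hd

lemma coprime_card (N k : ℕ) (hk : 1 ≤ k) :
    ((CoprimeCode N k).card : ℤ)
      = ∑ d ∈ Finset.Icc 1 N, (μ d : ℤ) * ((N / d).choose k : ℤ) := by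
  classical
  have key : ∀ t ∈ SignalSpace N k,
      (if Finset.univ.gcd t = 1 then (1 : ℤ) else 0)
        = ∑ d ∈ Finset.Icc 1 N, if d ∣ Finset.univ.gcd t then (μ d : ℤ) else 0 := by
    intro t ht
    rw [mem_sig] at ht
    set g := Finset.univ.gcd t with hg
    have hi : (⟨0, hk⟩ : Fin k) ∈ Finset.univ := Finset.mem_univ _
    have hdvd : g ∣ t ⟨0, hk⟩ := Finset.gcd_dvd hi
    have htpos : 1 ≤ t ⟨0, hk⟩ := ht.1 _
    have hgpos : 1 ≤ g := Nat.pos_of_dvd_of_pos hdvd htpos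
    have hgN : g ≤ N := le_trans (Nat.le_of_dvd htpos hdvd)
      (le_trans (Finset.single_le_sum (fun j _ => Nat.zero_le _) hi) ht.2)
    have := congrArg (fun f : ArithmeticFunction ℤ => f g)
      (ArithmeticFunction.moebius_mul_coe_zeta)
    simp only [ArithmeticFunction.coe_mul_zeta_apply, ArithmeticFunction.one_apply] at this
    have hdiv : g.divisors = (Finset.Icc 1 N).filter (· ∣ g) := by
      ext d
      simp only [Nat.mem_divisors, Finset.mem_filter, Finset.mem_Icc]
      constructor
      · rintro ⟨h1, _⟩
        exact ⟨⟨Nat.pos_of_dvd_of_pos h1 hgpos, le_trans (Nat.le_of_dvd hgpos h1) hgN⟩, h1⟩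
      · rintro ⟨-, h1⟩
        exact ⟨h1, by omega⟩
    rw [← this, hdiv, Finset.sum_filter]
  have : ((CoprimeCode N k).card : ℤ)
      = ∑ t ∈ SignalSpace N k, if Finset.univ.gcd t = 1 then (1 : ℤ) else 0 := by
    rw [CoprimeCode, Finset.card_filter, Nat.cast_sum]
    simp
  rw [this, Finset.sum_congr rfl key, Finset.sum_comm]
  refine Finset.sum_congr rfl fun d hd => ?_
  rw [Finset.mem_Icc] at hd
  have hfeq : (SignalSpace N k).filter (fun t => d ∣ Finset.univ.gcd t)
      = (SignalSpace N k).filter (fun t => ∀ i, d ∣ t i) :=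
    Finset.filter_congr fun t _ => by simp [Finset.dvd_gcd_iff]
  rw [← dvd_count N k d hd.1, ← Finset.sum_filter, hfeq, Finset.sum_const, nsmul_eq_mul, mul_comm]

-- Lemma A
lemma tendsto_desc_div_pow (k : ℕ) :
    Tendsto (fun n : ℕ => (n.descFactorial k : ℝ) / (n : ℝ) ^ k) atTop (nhds 1) := by
  have h1 : Tendsto (fun n : ℕ => ∏ i ∈ Finset.range k, (((n : ℝ) - i) / n)) atTop
      (nhds (∏ i ∈ Finset.range k, (1 : ℝ))) := by
    refine tendsto_finset_prod _ fun i _ => ?_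
    have : Tendsto (fun n : ℕ => 1 - (i : ℝ) / n) atTop (nhds (1 - 0)) :=
      tendsto_const_nhds.sub (tendsto_const_nhds.div_atTop tendsto_natCast_atTop_atTop)
    rw [sub_zero] at this
    refine this.congr' ?_
    filter_upwards [eventually_ge_atTop 1] with n hn
    have hn' : (n : ℝ) ≠ 0 := by positivity
    field_simp
  rw [Finset.prod_const_one] at h1
  refine h1.congr' ?_
  filter_upwards [eventually_ge_atTop k] with n hn
  rw [Finset.prod_div_distrib, Finset.prod_const, Finset.card_range,
    Nat.descFactorial_eq_prod_range, Nat.cast_prod]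
  congr 1
  refine Finset.prod_congr rfl fun i hi => ?_
  rw [Finset.mem_range] at hi
  rw [Nat.cast_sub (le_trans hi.le hn)]

lemma tendsto_choose_div_pow (k : ℕ) :
    Tendsto (fun n : ℕ => (n.choose k : ℝ) / (n : ℝ) ^ k) atTop
      (nhds (1 / (k.factorial : ℝ))) := by
  have := (tendsto_desc_div_pow k).mul_const (1 / (k.factorial : ℝ))
  rw [one_mul] at this
  refine this.congr fun n => ?_
  have hfac : (k.factorial : ℝ) ≠ 0 := by positivity
  rw [Nat.descFactorial_eq_factorial_mul_choose, Nat.cast_mul, div_mul_eq_mul_div, mul_one_div,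
    mul_comm ((k.factorial : ℝ)) ((n.choose k : ℝ)), mul_div_assoc ((n.choose k : ℝ)),
    div_self hfac, mul_one]

-- Lemma B
lemma tendsto_floor_div (d : ℕ) (hd : 1 ≤ d) :
    Tendsto (fun N : ℕ => ((N / d : ℕ) : ℝ) / (N : ℝ)) atTop (nhds (1 / d)) := by
  have hlow : Tendsto (fun N : ℕ => 1 / (d : ℝ) - 1 / N) atTop (nhds (1 / d)) := by
    have : Tendsto (fun N : ℕ => 1 / (d : ℝ) - 1 / N) atTop (nhds (1 / d - 0)) :=
      tendsto_const_nhds.sub (tendsto_const_nhds.div_atTop tendsto_natCast_atTop_atTop)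
    rwa [sub_zero] at this
  refine tendsto_of_tendsto_of_tendsto_of_le_of_le' hlow tendsto_const_nhds ?_ ?_
  · filter_upwards [eventually_ge_atTop 1] with N hN
    have hN' : (0 : ℝ) < N := by positivity
    have hd' : (0 : ℝ) < d := by positivity
    have key : (N : ℝ) < ((N / d : ℕ) : ℝ) * d + d := by
      have h1 : N % d < d := Nat.mod_lt _ hd
      have h2 : d * (N / d) + N % d = N := Nat.div_add_mod N d
      have h3 : (N : ℕ) < d * (N / d) + d := by omega
      calc (N : ℝ) < ((d * (N / d) + d : ℕ) : ℝ) := by exact_mod_cast h3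
        _ = ((N / d : ℕ) : ℝ) * d + d := by push_cast; ring
    rw [div_sub_div _ _ (ne_of_gt hd') (ne_of_gt hN'), div_le_div_iff₀ (by positivity) hN']
    nlinarith [Nat.cast_nonneg (α := ℝ) (N / d)]
  · filter_upwards [eventually_ge_atTop 1] with N hN
    have hN' : (0 : ℝ) < N := by positivity
    have hd' : (0 : ℝ) < d := by positivity
    rw [div_le_div_iff₀ hN' hd']
    have h := Nat.cast_div_le (α := ℝ) (m := N) (n := d)
    have h2 : (N : ℝ) / d * d = N := div_mul_cancel₀ _ hd'.ne'
    nlinarith [mul_le_mul_of_nonneg_right h hd'.le]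

lemma tendsto_choose_ratio (k d : ℕ) (hk : 1 ≤ k) (hd : 1 ≤ d) :
    Tendsto (fun N : ℕ => (((N / d).choose k : ℝ)) / (N.choose k : ℝ)) atTop
      (nhds (1 / (d : ℝ) ^ k)) := by
  have hMdiv : Tendsto (fun N : ℕ => N / d) atTop atTop := by
    refine tendsto_atTop_atTop.2 fun b => ⟨d * b, fun n hn => ?_⟩
    exact (Nat.le_div_iff_mul_le hd).2 (by nlinarith)
  have h1 : Tendsto (fun N : ℕ => ((N / d).choose k : ℝ) / ((N / d : ℕ) : ℝ) ^ k) atTop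
      (nhds (1 / (k.factorial : ℝ))) := (tendsto_choose_div_pow k).comp hMdiv
  have h2 : Tendsto (fun N : ℕ => (((N / d : ℕ) : ℝ) / N) ^ k) atTop
      (nhds ((1 / d : ℝ) ^ k)) := (tendsto_floor_div d hd).pow k
  have h3 : Tendsto (fun N : ℕ => ((N : ℝ) ^ k / (N.choose k : ℝ))) atTop
      (nhds (k.factorial : ℝ)) := by
    have := (tendsto_choose_div_pow k).inv₀ (by positivity)
    simp only [one_div, inv_inv] at this
    refine this.congr fun n => ?_
    rw [inv_div]
  have := (h1.mul h2).mul h3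
  have heq : (1 / (k.factorial : ℝ)) * ((1 / d : ℝ) ^ k) * (k.factorial : ℝ)
      = 1 / (d : ℝ) ^ k := by
    have hfac : (k.factorial : ℝ) ≠ 0 := by positivity
    field_simp
    have hd0 : (d : ℝ) ≠ 0 := by exact_mod_cast (by omega : d ≠ 0)
    rw [← mul_pow, one_div, inv_mul_cancel₀ hd0, one_pow]
  rw [heq] at this
  refine this.congr' ?_
  filter_upwards [eventually_ge_atTop (d * k + d + k)] with N hN
  have hM : 1 ≤ N / d := (Nat.one_le_div_iff hd).2 (by omega)
  have hMk : k ≤ N / d := (Nat.le_div_iff_mul_le hd).2 (by nlinarith)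
  have hNk : k ≤ N := by omega
  have hM0 : ((N / d : ℕ) : ℝ) ≠ 0 := by positivity
  have hN0 : (N : ℝ) ≠ 0 := by
    have : 1 ≤ N := by omega
    positivity
  have hchoose : (N.choose k : ℝ) ≠ 0 := by
    have := Nat.choose_pos hNk
    positivity
  field_simp
  rw [div_pow, mul_assoc, div_mul_cancel₀ _ (pow_ne_zero k hN0)]

lemma ratio_bound (k : ℕ) (hk : 1 ≤ k) (N d : ℕ) (hN : 2 * k ≤ N) :
    ((N / (d + 1)).choose k : ℝ) / (N.choose k : ℝ) ≤ 2 ^ k / ((d : ℝ) + 1) ^ k := by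
  set m := N / (d + 1) with hm
  have hnat : (d + 1) ^ k * (Nat.factorial k * m.choose k)
      ≤ 2 ^ k * (Nat.factorial k * N.choose k) := by
    calc (d + 1) ^ k * (Nat.factorial k * m.choose k)
        = (d + 1) ^ k * m.descFactorial k := by rw [Nat.descFactorial_eq_factorial_mul_choose]
      _ ≤ (d + 1) ^ k * m ^ k := Nat.mul_le_mul_left _ (Nat.descFactorial_le_pow m k)
      _ = ((d + 1) * m) ^ k := (mul_pow _ _ _).symm
      _ ≤ N ^ k := Nat.pow_le_pow_left (by rw [hm, mul_comm]; exact Nat.div_mul_le_self N (d+1)) k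
      _ ≤ (2 * (N + 1 - k)) ^ k := Nat.pow_le_pow_left (by omega) k
      _ = 2 ^ k * (N + 1 - k) ^ k := mul_pow _ _ _
      _ ≤ 2 ^ k * N.descFactorial k := Nat.mul_le_mul_left _ (Nat.pow_sub_le_descFactorial N k)
      _ = 2 ^ k * (Nat.factorial k * N.choose k) := by
          rw [Nat.descFactorial_eq_factorial_mul_choose]
  have hkN : k ≤ N := by omega
  have hpos : (0 : ℝ) < (N.choose k : ℝ) := by exact_mod_cast Nat.choose_pos hkN
  have hd : (0 : ℝ) < ((d : ℝ) + 1) ^ k := by positivity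
  rw [div_le_div_iff₀ hpos hd]
  have hreal : (((d : ℝ) + 1)) ^ k * ((Nat.factorial k : ℝ) * m.choose k)
      ≤ 2 ^ k * ((Nat.factorial k : ℝ) * N.choose k) := by exact_mod_cast hnat
  have hfac : (0 : ℝ) < (Nat.factorial k : ℝ) := by exact_mod_cast Nat.factorial_pos k
  nlinarith [hreal, hfac]

lemma shifted_summable (k : ℕ) (hk : 2 ≤ k) :
    Summable (fun d : ℕ => (1 : ℝ) / ((d : ℝ) + 1) ^ k) := by
  have h : Summable (fun d : ℕ => (1 : ℝ) / (d : ℝ) ^ k) :=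
    Real.summable_one_div_nat_pow.2 (by omega)
  have h2 := (_root_.summable_nat_add_iff 1).2 h
  refine h2.congr fun d => ?_
  push_cast
  ring_nf

lemma bound_summable (k : ℕ) (hk : 2 ≤ k) :
    Summable (fun d : ℕ => (2 : ℝ) ^ k / ((d : ℝ) + 1) ^ k) := by
  refine ((shifted_summable k hk).mul_left ((2 : ℝ) ^ k)).congr fun d => ?_
  rw [mul_one_div]

lemma zetaSum_pos (k : ℕ) (hk : 2 ≤ k) : 0 < zetaSum k := by
  have hsum := shifted_summable k hk
  have h0 : (0 : ℝ) < (1 : ℝ) / ((0 : ℕ) + 1 : ℝ) ^ k := by norm_num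
  calc (0 : ℝ) < (1 : ℝ) / (((0 : ℕ) : ℝ) + 1) ^ k := by norm_num
    _ ≤ zetaSum k := Summable.le_tsum hsum 0 fun j _ => by positivity

open scoped LSeries.notation in
lemma moebius_tsum (k : ℕ) (hk : 2 ≤ k) :
    ∑' d : ℕ, ((μ (d + 1) : ℝ) / ((d : ℝ) + 1) ^ k) = (zetaSum k)⁻¹ := by
  have hs : 1 < (k : ℂ).re := by
    simp only [Complex.natCast_re]
    exact_mod_cast lt_of_lt_of_le one_lt_two hk
  have hζ : LSeriesSummable ↗(ζ : ArithmeticFunction ℕ) (k : ℂ) :=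
    LSeriesSummable_zeta_iff.2 hs
  have hμ : LSeriesSummable ↗μ (k : ℂ) := LSeriesSummable_moebius_iff.2 hs
  have hmul := LSeries_zeta_mul_Lseries_moebius (s := (k : ℂ)) hs
  have hz : LSeries ↗(ζ : ArithmeticFunction ℕ) (k : ℂ) = ((zetaSum k : ℝ) : ℂ) := by
    rw [LSeries, Summable.tsum_eq_zero_add hζ]
    simp only [LSeries.term_zero, zero_add]
    rw [zetaSum, Complex.ofReal_tsum]
    refine tsum_congr fun n => ?_
    rw [LSeries.term_of_ne_zero (Nat.succ_ne_zero n)]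
    push_cast
    rw [Complex.cpow_natCast]
    simp [ArithmeticFunction.zeta_apply, Nat.succ_ne_zero]
  have hmz : LSeries ↗μ (k : ℂ)
      = ((∑' d : ℕ, ((μ (d + 1) : ℝ) / ((d : ℝ) + 1) ^ k) : ℝ) : ℂ) := by
    rw [LSeries, Summable.tsum_eq_zero_add hμ]
    simp only [LSeries.term_zero, zero_add]
    rw [Complex.ofReal_tsum]
    refine tsum_congr fun n => ?_
    rw [LSeries.term_of_ne_zero (Nat.succ_ne_zero n)]
    push_cast
    rw [Complex.cpow_natCast]
  rw [hz, hmz, ← Complex.ofReal_mul, ← Complex.ofReal_one, Complex.ofReal_inj] at hmul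
  have hzpos := zetaSum_pos k hk
  field_simp
  linarith [hmul]

end CoprimeDensityAux

open CoprimeDensityAux ArithmeticFunction ArithmeticFunction.Moebius in
theorem coprimeCode_density (k : ℕ) (hk : 2 ≤ k) :
    Tendsto (fun N : ℕ => ((CoprimeCode N k).card : ℝ) / (N.choose k : ℝ)) atTop
      (nhds (zetaSum k)⁻¹) := by
  have hk1 : 1 ≤ k := by omega
  set f : ℕ → ℕ → ℝ := fun N d =>
    (μ (d + 1) : ℝ) * (((N / (d + 1)).choose k : ℝ) / (N.choose k : ℝ)) with hf
  have stepA : ∀ N : ℕ, ((CoprimeCode N k).card : ℝ) / (N.choose k : ℝ) = ∑' d : ℕ, f N d := by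
    intro N
    have hzero : ∀ d ∉ Finset.range N, f N d = 0 := by
      intro d hd
      rw [Finset.mem_range, not_lt] at hd
      have : N / (d + 1) = 0 := Nat.div_eq_of_lt (by omega)
      simp [hf, this, Nat.choose_eq_zero_of_lt (by omega : 0 < k)]
    rw [tsum_eq_sum hzero]
    have hcast : ((CoprimeCode N k).card : ℝ)
        = ∑ d ∈ Finset.Icc 1 N, (μ d : ℝ) * ((N / d).choose k : ℝ) := by
      have := coprime_card N k hk1
      have h2 : (((CoprimeCode N k).card : ℤ) : ℝ)
          = ((∑ d ∈ Finset.Icc 1 N, (μ d : ℤ) * ((N / d).choose k : ℤ) : ℤ) : ℝ) := by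
        exact_mod_cast congrArg (fun z : ℤ => (z : ℝ)) this
      push_cast at h2 ⊢
      exact h2
    rw [hcast]
    have hIcc : ∑ d ∈ Finset.Icc 1 N, (μ d : ℝ) * ((N / d).choose k : ℝ)
        = ∑ d ∈ Finset.range N, (μ (d + 1) : ℝ) * ((N / (d + 1)).choose k : ℝ) := by
      rw [← Finset.Ico_add_one_right_eq_Icc, Finset.sum_Ico_eq_sum_range]
      refine Finset.sum_congr (by norm_num) fun d _ => by rw [add_comm 1 d]
    rw [hIcc, Finset.sum_div]
    exact Finset.sum_congr rfl fun d _ => by rw [hf, mul_div_assoc]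
  have hbound := bound_summable k hk
  have hptwise : ∀ d : ℕ, Tendsto (fun N => f N d) atTop
      (nhds ((μ (d + 1) : ℝ) * (1 / ((d : ℝ) + 1) ^ k))) := by
    intro d
    have h1 := (tendsto_choose_ratio k (d + 1) hk1 (by omega)).const_mul ((μ (d + 1) : ℝ))
    have : (((d + 1 : ℕ) : ℝ)) = (d : ℝ) + 1 := by push_cast; ring
    rwa [this] at h1
  have hdom : ∀ᶠ N in atTop, ∀ d : ℕ, ‖f N d‖ ≤ (2 : ℝ) ^ k / ((d : ℝ) + 1) ^ k := by
    filter_upwards [eventually_ge_atTop (2 * k)] with N hN d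
    rw [hf, norm_mul]
    have hμ : ‖(μ (d + 1) : ℝ)‖ ≤ 1 := by
      rw [Real.norm_eq_abs]
      exact_mod_cast ArithmeticFunction.abs_moebius_le_one (n := d + 1)
    have hr : ‖(((N / (d + 1)).choose k : ℝ) / (N.choose k : ℝ))‖
        ≤ (2 : ℝ) ^ k / ((d : ℝ) + 1) ^ k := by
      rw [Real.norm_eq_abs, abs_of_nonneg (by positivity)]
      exact ratio_bound k hk1 N d hN
    calc ‖(μ (d + 1) : ℝ)‖ * ‖(((N / (d + 1)).choose k : ℝ) / (N.choose k : ℝ))‖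
        ≤ 1 * ((2 : ℝ) ^ k / ((d : ℝ) + 1) ^ k) := by
          refine mul_le_mul hμ hr (norm_nonneg _) zero_le_one
      _ = (2 : ℝ) ^ k / ((d : ℝ) + 1) ^ k := one_mul _
  have hmain := tendsto_tsum_of_dominated_convergence hbound hptwise hdom
  have hval : ∑' d : ℕ, (μ (d + 1) : ℝ) * (1 / ((d : ℝ) + 1) ^ k) = (zetaSum k)⁻¹ := by
    rw [← moebius_tsum k hk]
    exact tsum_congr fun d => by rw [mul_one_div]
  rw [hval] at hmain
  exact hmain.congr fun N => (stepA N).symm
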